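/- Consider N ≥ 1 agents and a budget B > 0, with two demand vectors X, X' ∈ ℝ^N satisfying 0 < X_i ≤ X'_i for all i. Let A be a maximizer of Σ_{i=1}^N log A_i over {A : 0 < A_i ≤ X_i for all i, Σ_i A_i ≤ B}, and let A' be a maximizer of Σ_{i=1}^N log A'_i over {A' : 0 < A'_i ≤ X'_i for all i, Σ_i A'_i ≤ B}. Then for every agent i: A'_i − A_i ≤ X'_i − X_i, and A_i − A'_i ≤ Σ_{j ≠ i} (X'_j − X_j). (Perturbation stability of water-filling: enlarging the demand caps can increase an agent's allocation by at most its own cap increase, and can decrease it by at most the total cap increase of the other agents.) -/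

import Mathlib

open Finset

/-- If the optimal allocation does not exhaust the budget, every coordinate is
saturated at its cap. -/
lemma eg_saturated_of_slack {N : ℕ} {B : ℝ} {X A : Fin N → ℝ}
    (hApos : ∀ i, 0 < A i) (hAle : ∀ i, A i ≤ X i)
    (hAmax : ∀ A₀ : Fin N → ℝ, (∀ i, 0 < A₀ i) → (∀ i, A₀ i ≤ X i) →
      (∑ i, A₀ i ≤ B) → ∑ i, Real.log (A₀ i) ≤ ∑ i, Real.log (A i))
    (hlt : ∑ i, A i < B) : ∀ i, A i = X i := by
  intro i
  by_contra h
  have hi : A i < X i := lt_of_le_of_ne (hAle i) h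
  set ε := min (X i - A i) (B - ∑ j, A j) with hεdef
  have hεpos : 0 < ε := lt_min (by linarith) (by linarith)
  have hε1 : ε ≤ X i - A i := min_le_left _ _
  have hε2 : ε ≤ B - ∑ j, A j := min_le_right _ _
  set A₀ := Function.update A i (A i + ε) with hA₀
  have hval : ∀ j, A₀ j = if j = i then A i + ε else A j := by
    intro j
    rcases eq_or_ne j i with rfl | hj
    · simp [hA₀]
    · simp [hA₀, Function.update_of_ne hj, hj]
  have h1 : ∀ j, 0 < A₀ j := by
    intro j; rw [hval]
    split_ifs with hj
    · linarith [hApos i]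
    · exact hApos j
  have h2 : ∀ j, A₀ j ≤ X j := by
    intro j; rw [hval]
    split_ifs with hj
    · subst hj; linarith
    · exact hAle j
  have hdecomp := Finset.sum_eq_sum_sdiff_singleton_add (Finset.mem_univ i) A
  have hsum : ∑ j, A₀ j = (∑ j, A j) + ε := by
    rw [hA₀, Finset.sum_update_of_mem (Finset.mem_univ i)]
    linarith [hdecomp]
  have h3 : ∑ j, A₀ j ≤ B := by rw [hsum]; linarith
  have hlog : ∑ j, Real.log (A₀ j) > ∑ j, Real.log (A j) := by
    have e1 : ∑ j, Real.log (A₀ j) =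
        Real.log (A i + ε) + ∑ j ∈ Finset.univ \ {i}, Real.log (A j) := by
      have hfun : (fun j => Real.log (A₀ j)) =
          Function.update (fun j => Real.log (A j)) i (Real.log (A i + ε)) := by
        funext j
        rcases eq_or_ne j i with rfl | hj
        · simp [hval]
        · simp [hval, hj, Function.update_of_ne hj]
      rw [hfun, Finset.sum_update_of_mem (Finset.mem_univ i)]
    have e2 : ∑ j, Real.log (A j) =
        Real.log (A i) + ∑ j ∈ Finset.univ \ {i}, Real.log (A j) := by
      rw [Finset.sum_eq_sum_sdiff_singleton_add (Finset.mem_univ i)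
        (fun j => Real.log (A j))]
      ring
    rw [e1, e2]
    have : Real.log (A i) < Real.log (A i + ε) :=
      Real.log_lt_log (hApos i) (by linarith)
    linarith
  exact absurd (hAmax A₀ h1 h2 h3) (not_le.mpr hlog)

/-- Water-level property: any unsaturated coordinate of the optimal allocation is
maximal among all coordinates. -/
lemma eg_level {N : ℕ} {B : ℝ} {X A : Fin N → ℝ}
    (hApos : ∀ i, 0 < A i) (hAle : ∀ i, A i ≤ X i) (hAsum : ∑ i, A i ≤ B)
    (hAmax : ∀ A₀ : Fin N → ℝ, (∀ i, 0 < A₀ i) → (∀ i, A₀ i ≤ X i) →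
      (∑ i, A₀ i ≤ B) → ∑ i, Real.log (A₀ i) ≤ ∑ i, Real.log (A i)) :
    ∀ i, A i < X i → ∀ j, A j ≤ A i := by
  intro i hi j
  by_contra h
  push_neg at h
  have hji : j ≠ i := by rintro rfl; exact lt_irrefl _ h
  set ε := min ((A j - A i) / 2) (X i - A i) with hεdef
  have hεpos : 0 < ε := lt_min (by linarith) (by linarith)
  have hε1 : ε ≤ (A j - A i) / 2 := min_le_left _ _
  have hε2 : ε ≤ X i - A i := min_le_right _ _
  set A₀ := Function.update (Function.update A i (A i + ε)) j (A j - ε) with hA₀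
  have hval : ∀ k, A₀ k = if k = j then A j - ε else if k = i then A i + ε else A k := by
    intro k
    rcases eq_or_ne k j with rfl | hkj
    · simp [hA₀]
    · rcases eq_or_ne k i with rfl | hki
      · simp [hA₀, Function.update_of_ne hkj, hkj]
      · simp [hA₀, Function.update_of_ne hkj, Function.update_of_ne hki, hkj, hki]
  have h1 : ∀ k, 0 < A₀ k := by
    intro k; rw [hval]
    split_ifs with hkj hki
    · linarith [hApos i]
    · linarith [hApos i]
    · exact hApos k
  have h2 : ∀ k, A₀ k ≤ X k := by
    intro k; rw [hval]
    split_ifs with hkj hki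
    · subst hkj; linarith [hAle k]
    · subst hki; linarith
    · exact hAle k
  have hij' : i ∈ Finset.univ \ ({j} : Finset (Fin N)) := by
    simp only [Finset.mem_sdiff, Finset.mem_univ, Finset.mem_singleton, true_and]
    exact fun e => hji e.symm
  have hsplit : ∀ f : Fin N → ℝ, ∑ k, f k =
      f j + (f i + ∑ k ∈ (Finset.univ \ {j}) \ {i}, f k) := by
    intro f
    rw [Finset.sum_eq_sum_sdiff_singleton_add (Finset.mem_univ j) f,
      Finset.sum_eq_sum_sdiff_singleton_add hij' f]
    ring
  have hvi : A₀ i = A i + ε := by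
    rw [hval, if_neg (fun e => hji e.symm), if_pos rfl]
  have hvj : A₀ j = A j - ε := by rw [hval, if_pos rfl]
  have hrest : ∀ k, k ≠ i → k ≠ j → A₀ k = A k := by
    intro k hki hkj; rw [hval, if_neg hkj, if_neg hki]
  have hrestsum : ∑ k ∈ (Finset.univ \ {j}) \ {i}, A₀ k
      = ∑ k ∈ (Finset.univ \ {j}) \ {i}, A k := by
    apply Finset.sum_congr rfl
    intro k hk
    simp only [Finset.mem_sdiff, Finset.mem_univ, Finset.mem_singleton, true_and] at hk
    exact hrest k hk.2 hk.1
  have hsum : ∑ k, A₀ k = ∑ k, A k := by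
    rw [hsplit A₀, hsplit A, hvi, hvj, hrestsum]; ring
  have h3 : ∑ k, A₀ k ≤ B := by rw [hsum]; exact hAsum
  have hlog : ∑ k, Real.log (A₀ k) > ∑ k, Real.log (A k) := by
    have hrestsum' : ∑ k ∈ (Finset.univ \ {j}) \ {i}, Real.log (A₀ k)
        = ∑ k ∈ (Finset.univ \ {j}) \ {i}, Real.log (A k) := by
      apply Finset.sum_congr rfl
      intro k hk
      simp only [Finset.mem_sdiff, Finset.mem_univ, Finset.mem_singleton, true_and] at hk
      rw [hrest k hk.2 hk.1]
    rw [hsplit (fun k => Real.log (A₀ k)), hsplit (fun k => Real.log (A k))]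
    simp only [hvi, hvj, hrestsum']
    have hAjε : 0 < A j - ε := by linarith [hApos i]
    have hAiε : 0 < A i + ε := by linarith [hApos i]
    have key : Real.log (A i) + Real.log (A j) < Real.log (A i + ε) + Real.log (A j - ε) := by
      rw [← Real.log_mul (ne_of_gt (hApos i)) (ne_of_gt (hApos j)),
        ← Real.log_mul (ne_of_gt hAiε) (ne_of_gt hAjε)]
      apply Real.log_lt_log (mul_pos (hApos i) (hApos j))
      have hq : 0 < ε * (A j - A i - ε) := mul_pos hεpos (by linarith)
      nlinarith [hq]
    linarith
  exact absurd (hAmax A₀ h1 h2 h3) (not_le.mpr hlog)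

/-- Perturbation stability of water-filling (core of Lemma 3 of the paper):
if the demand caps are enlarged from `X` to `X'` (componentwise), then each agent's
optimal allocation can increase by at most its own cap increase `X'_i − X_i`, and
can decrease by at most the total cap increase `∑_{j ≠ i} (X'_j − X_j)` of the
other agents. -/
theorem waterfilling_perturbation_stability
    (N : ℕ) (hN : 1 ≤ N) (B : ℝ) (hB : 0 < B)
    (X X' : Fin N → ℝ)
    (hX : ∀ i, 0 < X i) (hXX' : ∀ i, X i ≤ X' i)
    (A A' : Fin N → ℝ)
    (hApos : ∀ i, 0 < A i) (hAle : ∀ i, A i ≤ X i) (hAsum : ∑ i, A i ≤ B)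
    (hAmax : ∀ A₀ : Fin N → ℝ, (∀ i, 0 < A₀ i) → (∀ i, A₀ i ≤ X i) →
      (∑ i, A₀ i ≤ B) → ∑ i, Real.log (A₀ i) ≤ ∑ i, Real.log (A i))
    (hA'pos : ∀ i, 0 < A' i) (hA'le : ∀ i, A' i ≤ X' i) (hA'sum : ∑ i, A' i ≤ B)
    (hA'max : ∀ A₀ : Fin N → ℝ, (∀ i, 0 < A₀ i) → (∀ i, A₀ i ≤ X' i) →
      (∑ i, A₀ i ≤ B) → ∑ i, Real.log (A₀ i) ≤ ∑ i, Real.log (A' i)) :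
    ∀ i, A' i - A i ≤ X' i - X i ∧
      A i - A' i ≤ ∑ j ∈ Finset.univ.erase i, (X' j - X j) := by
  -- Claim 1: for every i, A' i - A i ≤ X' i - X i
  have claim1 : ∀ i, A' i - A i ≤ X' i - X i := by
    intro i
    rcases eq_or_lt_of_le (hAle i) with heq | hlt
    · have := hA'le i
      linarith
    · by_contra hcon
      push_neg at hcon
      have hAi' : A i < A' i := by linarith [hXX' i]
      have hsat : ∑ j, A j = B := by
        rcases eq_or_lt_of_le hAsum with h | h
        · exact h
        · exact absurd (eg_saturated_of_slack hApos hAle hAmax h i) (ne_of_lt hlt)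
      have hexists : ∃ j, A' j < A j := by
        by_contra hall
        push_neg at hall
        have : ∑ j, A j < ∑ j, A' j :=
          Finset.sum_lt_sum (fun j _ => hall j) ⟨i, Finset.mem_univ i, hAi'⟩
        linarith
      obtain ⟨j, hj⟩ := hexists
      have hjlt : A' j < X' j := lt_of_lt_of_le hj (le_trans (hAle j) (hXX' j))
      have h1 : A' i ≤ A' j := eg_level hA'pos hA'le hA'sum hA'max j hjlt i
      have h2 : A j ≤ A i := eg_level hApos hAle hAsum hAmax i hlt j
      linarith
  -- Total allocation weakly increases
  have hsums : ∑ j, A j ≤ ∑ j, A' j := by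
    by_contra h
    push_neg at h
    have h' : ∑ j, A' j < B := lt_of_lt_of_le h hAsum
    have hsat := eg_saturated_of_slack hA'pos hA'le hA'max h'
    have : ∑ j, A j ≤ ∑ j, A' j :=
      Finset.sum_le_sum (fun j _ => by rw [hsat j]; exact le_trans (hAle j) (hXX' j))
    linarith
  intro i
  refine ⟨claim1 i, ?_⟩
  have e1 : ∑ j, A j = A i + ∑ j ∈ Finset.univ.erase i, A j :=
    (Finset.add_sum_erase Finset.univ A (Finset.mem_univ i)).symm
  have e2 : ∑ j, A' j = A' i + ∑ j ∈ Finset.univ.erase i, A' j :=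
    (Finset.add_sum_erase Finset.univ A' (Finset.mem_univ i)).symm
  have hterm : ∑ j ∈ Finset.univ.erase i, (A' j - A j)
      ≤ ∑ j ∈ Finset.univ.erase i, (X' j - X j) :=
    Finset.sum_le_sum (fun j _ => by linarith [claim1 j])
  have hsub : ∑ j ∈ Finset.univ.erase i, (A' j - A j)
      = ∑ j ∈ Finset.univ.erase i, A' j - ∑ j ∈ Finset.univ.erase i, A j :=
    Finset.sum_sub_distrib _ _
  linarith
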